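/- For every 1 ≤ r ≤ n−1, every Q ∈ {0,1} and all bits D₁,…,D_r, e₁,…,e_r ∈ {0,1}, the vector w = M_{r,D_r,e_r} ⋯ M_{1,D_1,e_1} · v_Q ∈ ℂ⁴ has real entries, exactly one of the two pairs (w₁,w₂), (w₃,w₄) equals (0,0), and the other pair has Euclidean norm 1. Moreover, for all bits D₁,…,D_n, e₁,…,e_n, Q, k₀ ∈ {0,1}, |u_{k₀}ᵀ · M_{n,D_n,e_n} ⋯ M_{1,D_1,e_1} · v_Q| = 1. -/

import Mathlib

open Complex Matrix

/-- The rotation matrix `R(a) = [[cos a, −sin a],[sin a, cos a]]` (with complex entries). -/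
noncomputable def Rrot (a : ℝ) : Matrix (Fin 2) (Fin 2) ℂ :=
  !![(Real.cos a : ℂ), -(Real.sin a : ℂ); (Real.sin a : ℂ), (Real.cos a : ℂ)]

/-- A `4×4` matrix built from four `2×2` blocks. -/
def blk (A B C D : Matrix (Fin 2) (Fin 2) ℂ) : Matrix (Fin 4) (Fin 4) ℂ :=
  Matrix.reindex finSumFinEquiv finSumFinEquiv (Matrix.fromBlocks A B C D)

/-- The `4×4` block matrices `M_{j,D,e}`: for `j ≤ n−1`,
`M_{j,D,e} = [[I₂, R(π/2)],[0,0]]` if `e = D` and `[[0,0],[R(φ_j+π/2), R(φ_j)]]` if `e ≠ D`;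
for `j = n`, `M_{n,D,e} = [[I₂,0],[R(φ_{n+1}+π/2),0]]·[[I₂,R(π/2)],[0,0]]` if `e = D` and
`[[0,R(π/2)],[0,R(φ_{n+1})]]·[[0,0],[R(φ_n+π/2),R(φ_n)]]` if `e ≠ D`. -/
noncomputable def Mmat (n : ℕ) (φ : ℕ → ℝ) (j : ℕ) (D e : Bool) :
    Matrix (Fin 4) (Fin 4) ℂ :=
  if j = n then
    if e = D then
      blk 1 0 (Rrot (φ (n + 1) + Real.pi / 2)) 0 * blk 1 (Rrot (Real.pi / 2)) 0 0
    else
      blk 0 (Rrot (Real.pi / 2)) 0 (Rrot (φ (n + 1))) *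
        blk 0 0 (Rrot (φ n + Real.pi / 2)) (Rrot (φ n))
  else
    if e = D then blk 1 (Rrot (Real.pi / 2)) 0 0
    else blk 0 0 (Rrot (φ j + Real.pi / 2)) (Rrot (φ j))

/-- `v₀ = (1,0,0,0)ᵀ`, `v₁ = (0,0,1,0)ᵀ` (indexed by the corresponding bit). -/
def vvec : Bool → Fin 4 → ℂ := fun Q => if Q then ![0, 0, 1, 0] else ![1, 0, 0, 0]

/-- `u₀ = (1,i,0,0)ᵀ`, `u₁ = (0,0,1,i)ᵀ` (indexed by the corresponding bit). -/
noncomputable def uvec : Bool → Fin 4 → ℂ := fun k => if k then ![0, 0, 1, I] else ![1, I, 0, 0]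

/-- The ordered product `M_{r,D_r,e_r} ⋯ M_{2,D_2,e_2} · M_{1,D_1,e_1}` for given bit
sequences `D`, `e`. -/
noncomputable def MprodSeq (n : ℕ) (φ : ℕ → ℝ) (D e : ℕ → Bool) :
    ℕ → Matrix (Fin 4) (Fin 4) ℂ
  | 0 => 1
  | l + 1 => Mmat n φ (l + 1) (D (l + 1)) (e (l + 1)) * MprodSeq n φ D e l

lemma blk_eq (A B C D : Matrix (Fin 2) (Fin 2) ℂ) :
    blk A B C D = !![A 0 0, A 0 1, B 0 0, B 0 1;
                     A 1 0, A 1 1, B 1 0, B 1 1;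
                     C 0 0, C 0 1, D 0 0, D 0 1;
                     C 1 0, C 1 1, D 1 0, D 1 1] := by
  ext i j
  fin_cases i <;> fin_cases j <;>
    simp [blk, Matrix.reindex_apply, Matrix.submatrix_apply, finSumFinEquiv] <;> rfl

lemma mulVec_four (M : Matrix (Fin 4) (Fin 4) ℂ) (w : Fin 4 → ℂ) (i : Fin 4) :
    (M *ᵥ w) i = M i 0 * w 0 + M i 1 * w 1 + M i 2 * w 2 + M i 3 * w 3 := by
  simp [Matrix.mulVec, dotProduct, Fin.sum_univ_four]

lemma ED_mulVec (w : Fin 4 → ℂ) :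
    blk 1 (Rrot (Real.pi / 2)) 0 0 *ᵥ w = ![w 0 - w 3, w 1 + w 2, 0, 0] := by
  funext i
  rw [mulVec_four, blk_eq]
  fin_cases i <;> norm_num [Rrot, Matrix.one_apply, Matrix.zero_apply, Matrix.cons_val_two, Matrix.cons_val_three, Matrix.head_cons, Matrix.tail_cons, Matrix.cons_val_one, Matrix.cons_val_zero] <;> ring

lemma NE_mulVec (a : ℝ) (w : Fin 4 → ℂ) :
    blk 0 0 (Rrot (a + Real.pi / 2)) (Rrot a) *ᵥ w =
      ![0, 0,
        -(Real.sin a : ℂ) * w 0 - (Real.cos a : ℂ) * w 1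
          + (Real.cos a : ℂ) * w 2 - (Real.sin a : ℂ) * w 3,
        (Real.cos a : ℂ) * w 0 - (Real.sin a : ℂ) * w 1
          + (Real.sin a : ℂ) * w 2 + (Real.cos a : ℂ) * w 3] := by
  funext i
  rw [mulVec_four, blk_eq]
  fin_cases i <;> norm_num [Rrot, Matrix.zero_apply, Real.cos_add, Real.sin_add, Matrix.cons_val_two, Matrix.cons_val_three, Matrix.head_cons, Matrix.tail_cons, Matrix.cons_val_one, Matrix.cons_val_zero] <;> ring

lemma F1_mulVec (a : ℝ) (w : Fin 4 → ℂ) :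
    blk 1 0 (Rrot (a + Real.pi / 2)) 0 *ᵥ w =
      ![w 0, w 1,
        -(Real.sin a : ℂ) * w 0 - (Real.cos a : ℂ) * w 1,
        (Real.cos a : ℂ) * w 0 - (Real.sin a : ℂ) * w 1] := by
  funext i
  rw [mulVec_four, blk_eq]
  fin_cases i <;>
    norm_num [Rrot, Matrix.one_apply, Matrix.zero_apply, Real.cos_add, Real.sin_add, Matrix.cons_val_two, Matrix.cons_val_three, Matrix.head_cons, Matrix.tail_cons, Matrix.cons_val_one, Matrix.cons_val_zero] <;> ring

lemma F2_mulVec (a : ℝ) (w : Fin 4 → ℂ) :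
    blk 0 (Rrot (Real.pi / 2)) 0 (Rrot a) *ᵥ w =
      ![-(w 3), w 2,
        (Real.cos a : ℂ) * w 2 - (Real.sin a : ℂ) * w 3,
        (Real.sin a : ℂ) * w 2 + (Real.cos a : ℂ) * w 3] := by
  funext i
  rw [mulVec_four, blk_eq]
  fin_cases i <;> norm_num [Rrot, Matrix.zero_apply, Matrix.cons_val_two, Matrix.cons_val_three, Matrix.head_cons, Matrix.tail_cons, Matrix.cons_val_one, Matrix.cons_val_zero] <;> ring

/-- The invariant: real entries and one of the two pairs zero, the other of norm 1. -/
def Good (w : Fin 4 → ℂ) : Prop :=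
  (∀ i, (w i).im = 0) ∧
    ((w 0 = 0 ∧ w 1 = 0 ∧ (w 2).re ^ 2 + (w 3).re ^ 2 = 1) ∨
     (w 2 = 0 ∧ w 3 = 0 ∧ (w 0).re ^ 2 + (w 1).re ^ 2 = 1))

lemma good_ED (w : Fin 4 → ℂ) (h : Good w) :
    (∀ i, ((blk 1 (Rrot (Real.pi / 2)) 0 0 *ᵥ w) i).im = 0) ∧
      (blk 1 (Rrot (Real.pi / 2)) 0 0 *ᵥ w) 2 = 0 ∧
      (blk 1 (Rrot (Real.pi / 2)) 0 0 *ᵥ w) 3 = 0 ∧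
      ((blk 1 (Rrot (Real.pi / 2)) 0 0 *ᵥ w) 0).re ^ 2 +
        ((blk 1 (Rrot (Real.pi / 2)) 0 0 *ᵥ w) 1).re ^ 2 = 1 := by
  obtain ⟨him, hc⟩ := h
  rw [ED_mulVec]
  refine ⟨?_, by simp, by simp, ?_⟩
  · intro i; fin_cases i <;> simp [him 0, him 1, him 2, him 3]
  · rcases hc with ⟨h0, h1, hs⟩ | ⟨h0, h1, hs⟩ <;>
      simp [h0, h1, Complex.sub_re, Complex.add_re, Complex.neg_re] <;> nlinarith [hs]

lemma good_ED' (w : Fin 4 → ℂ) (h : Good w) :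
    Good (blk 1 (Rrot (Real.pi / 2)) 0 0 *ᵥ w) := by
  obtain ⟨him, h2, h3, hs⟩ := good_ED w h
  exact ⟨him, Or.inr ⟨h2, h3, hs⟩⟩

lemma good_NE (a : ℝ) (w : Fin 4 → ℂ) (h : Good w) :
    (∀ i, ((blk 0 0 (Rrot (a + Real.pi / 2)) (Rrot a) *ᵥ w) i).im = 0) ∧
      (blk 0 0 (Rrot (a + Real.pi / 2)) (Rrot a) *ᵥ w) 0 = 0 ∧
      (blk 0 0 (Rrot (a + Real.pi / 2)) (Rrot a) *ᵥ w) 1 = 0 ∧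
      ((blk 0 0 (Rrot (a + Real.pi / 2)) (Rrot a) *ᵥ w) 2).re ^ 2 +
        ((blk 0 0 (Rrot (a + Real.pi / 2)) (Rrot a) *ᵥ w) 3).re ^ 2 = 1 := by
  obtain ⟨him, hc⟩ := h
  rw [NE_mulVec]
  have hp := Real.sin_sq_add_cos_sq a
  refine ⟨?_, by simp, by simp, ?_⟩
  · intro i
    fin_cases i <;> simp [him 0, him 1, him 2, him 3]
  · rcases hc with ⟨h0, h1, hs⟩ | ⟨h0, h1, hs⟩
    · simp only [Matrix.cons_val_zero, Matrix.cons_val_one, Matrix.head_cons,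
        Matrix.cons_val_two, Matrix.cons_val_three, Matrix.tail_cons, Complex.add_re,
        Complex.sub_re, Complex.mul_re, Complex.neg_re, Complex.neg_im, Complex.ofReal_im,
        Complex.ofReal_re, h0, h1, Complex.zero_re, Complex.zero_im,
        him 0, him 1, him 2, him 3]
      linear_combination ((w 2).re ^ 2 + (w 3).re ^ 2) * hp + hs
    · simp only [Matrix.cons_val_zero, Matrix.cons_val_one, Matrix.head_cons,
        Matrix.cons_val_two, Matrix.cons_val_three, Matrix.tail_cons, Complex.add_re,
        Complex.sub_re, Complex.mul_re, Complex.neg_re, Complex.neg_im, Complex.ofReal_im,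
        Complex.ofReal_re, h0, h1, Complex.zero_re, Complex.zero_im,
        him 0, him 1, him 2, him 3]
      linear_combination ((w 0).re ^ 2 + (w 1).re ^ 2) * hp + hs

lemma good_NE' (a : ℝ) (w : Fin 4 → ℂ) (h : Good w) :
    Good (blk 0 0 (Rrot (a + Real.pi / 2)) (Rrot a) *ᵥ w) := by
  obtain ⟨him, h0, h1, hs⟩ := good_NE a w h
  exact ⟨him, Or.inl ⟨h0, h1, hs⟩⟩

lemma good_vvec (Q : Bool) : Good (vvec Q) := by
  cases Q <;> refine ⟨fun i => by fin_cases i <;> simp [vvec], ?_⟩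
  · right; norm_num [vvec, Matrix.cons_val_two, Matrix.cons_val_three, Matrix.head_cons, Matrix.tail_cons, Matrix.cons_val_one, Matrix.cons_val_zero]
  · left; norm_num [vvec, Matrix.cons_val_two, Matrix.cons_val_three, Matrix.head_cons, Matrix.tail_cons, Matrix.cons_val_one, Matrix.cons_val_zero]

lemma good_prod (n : ℕ) (hn : 2 ≤ n) (φ : ℕ → ℝ) (D e : ℕ → Bool) (Q : Bool) :
    ∀ r : ℕ, r ≤ n - 1 → Good (MprodSeq n φ D e r *ᵥ vvec Q) := by
  intro r
  induction r with
  | zero => intro _; simpa [MprodSeq] using good_vvec Q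
  | succ l ih =>
    intro hr
    have hl : l ≤ n - 1 := by omega
    have hG := ih hl
    have hne : l + 1 ≠ n := by omega
    rw [MprodSeq, ← Matrix.mulVec_mulVec, Mmat, if_neg hne]
    by_cases he : e (l + 1) = D (l + 1)
    · rw [if_pos he]; exact good_ED' _ hG
    · rw [if_neg he]; exact good_NE' _ _ hG

lemma sq_abs_of_real (z : ℂ) (hz : z.im = 0) : ‖z‖ ^ 2 = z.re ^ 2 := by
  rw [Complex.sq_norm, Complex.normSq_apply, hz]; ring

lemma abs_pair (z₀ z₁ : ℂ) (h0 : z₀.im = 0) (h1 : z₁.im = 0)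
    (hs : z₀.re ^ 2 + z₁.re ^ 2 = 1) : ‖z₀ + I * z₁‖ = 1 := by
  have e0 : z₀ = (z₀.re : ℂ) := Complex.ext rfl (by simp [h0])
  have e1 : z₁ = (z₁.re : ℂ) := Complex.ext rfl (by simp [h1])
  rw [e0, e1, mul_comm, Complex.norm_def, Complex.normSq_add_mul_I, hs, Real.sqrt_one]

/-- For every `1 ≤ r ≤ n−1`, every `Q ∈ {0,1}` and all bits
`D₁,…,D_r, e₁,…,e_r`, the vector `w = M_{r,D_r,e_r} ⋯ M_{1,D_1,e_1} · v_Q ∈ ℂ⁴` has real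
entries, exactly one of the two pairs `(w₁,w₂)`, `(w₃,w₄)` equals `(0,0)`, and the other
pair has Euclidean norm `1`.  Moreover, for all bits `D₁,…,D_n, e₁,…,e_n, Q, k₀`,
`|u_{k₀}ᵀ · M_{n,D_n,e_n} ⋯ M_{1,D_1,e_1} · v_Q| = 1`. -/
theorem stmt7 (n : ℕ) (hn : 2 ≤ n) (φ : ℕ → ℝ) :
    (∀ r : ℕ, 1 ≤ r → r ≤ n - 1 → ∀ D e : ℕ → Bool, ∀ Q : Bool,
      (∀ i : Fin 4, ((MprodSeq n φ D e r *ᵥ vvec Q) i).im = 0) ∧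
      ((((MprodSeq n φ D e r *ᵥ vvec Q) 0 = 0 ∧ (MprodSeq n φ D e r *ᵥ vvec Q) 1 = 0) ∧
          ‖(MprodSeq n φ D e r *ᵥ vvec Q) 2‖ ^ 2 +
            ‖(MprodSeq n φ D e r *ᵥ vvec Q) 3‖ ^ 2 = 1) ∨
        (((MprodSeq n φ D e r *ᵥ vvec Q) 2 = 0 ∧ (MprodSeq n φ D e r *ᵥ vvec Q) 3 = 0) ∧
          ‖(MprodSeq n φ D e r *ᵥ vvec Q) 0‖ ^ 2 +
            ‖(MprodSeq n φ D e r *ᵥ vvec Q) 1‖ ^ 2 = 1))) ∧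
    (∀ D e : ℕ → Bool, ∀ Q k₀ : Bool,
      ‖uvec k₀ ⬝ᵥ (MprodSeq n φ D e n *ᵥ vvec Q)‖ = 1) := by
  constructor
  · intro r h1 h2 D e Q
    obtain ⟨him, hc⟩ := good_prod n hn φ D e Q r h2
    refine ⟨him, ?_⟩
    rcases hc with ⟨h0, h1', hs⟩ | ⟨h0, h1', hs⟩
    · left
      rw [sq_abs_of_real _ (him 2), sq_abs_of_real _ (him 3)]
      exact ⟨⟨h0, h1'⟩, hs⟩
    · right
      rw [sq_abs_of_real _ (him 0), sq_abs_of_real _ (him 1)]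
      exact ⟨⟨h0, h1'⟩, hs⟩
  · intro D e Q k
    have hm : n - 1 + 1 = n := by omega
    have hG := good_prod n hn φ D e Q (n - 1) le_rfl
    rw [← hm, MprodSeq, hm, ← Matrix.mulVec_mulVec]
    set w := MprodSeq n φ D e (n - 1) *ᵥ vvec Q with hw
    rw [Mmat, if_pos rfl]
    have hp := Real.sin_sq_add_cos_sq (φ (n + 1))
    by_cases he : e n = D n
    · rw [if_pos he, ← Matrix.mulVec_mulVec]
      obtain ⟨him, h2, h3, hs⟩ := good_ED w hG
      set v := blk 1 (Rrot (Real.pi / 2)) 0 0 *ᵥ w with hv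
      rw [F1_mulVec]
      cases k
      · have : uvec false ⬝ᵥ
            ![v 0, v 1,
              -(Real.sin (φ (n+1)) : ℂ) * v 0 - (Real.cos (φ (n+1)) : ℂ) * v 1,
              (Real.cos (φ (n+1)) : ℂ) * v 0 - (Real.sin (φ (n+1)) : ℂ) * v 1] =
            v 0 + I * v 1 := by
          simp [uvec, dotProduct, Fin.sum_univ_four]
        rw [this]
        exact abs_pair _ _ (him 0) (him 1) hs
      · have : uvec true ⬝ᵥ
            ![v 0, v 1,
              -(Real.sin (φ (n+1)) : ℂ) * v 0 - (Real.cos (φ (n+1)) : ℂ) * v 1,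
              (Real.cos (φ (n+1)) : ℂ) * v 0 - (Real.sin (φ (n+1)) : ℂ) * v 1] =
            (-(Real.sin (φ (n+1)) : ℂ) * v 0 - (Real.cos (φ (n+1)) : ℂ) * v 1) +
              I * ((Real.cos (φ (n+1)) : ℂ) * v 0 - (Real.sin (φ (n+1)) : ℂ) * v 1) := by
          simp [uvec, dotProduct, Fin.sum_univ_four]
        rw [this]
        refine abs_pair _ _ ?_ ?_ ?_
        · simp [Complex.sub_im, Complex.mul_im, him 0, him 1]
        · simp [Complex.sub_im, Complex.mul_im, him 0, him 1]
        · simp only [Complex.sub_re, Complex.mul_re, Complex.neg_re, Complex.neg_im,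
            Complex.ofReal_re, Complex.ofReal_im, him 0, him 1]
          linear_combination ((v 0).re ^ 2 + (v 1).re ^ 2) * hp + hs
    · rw [if_neg he, ← Matrix.mulVec_mulVec]
      obtain ⟨him, h0, h1, hs⟩ := good_NE (φ n) w hG
      set v := blk 0 0 (Rrot (φ n + Real.pi / 2)) (Rrot (φ n)) *ᵥ w with hv
      rw [F2_mulVec]
      cases k
      · have : uvec false ⬝ᵥ
            ![-(v 3), v 2,
              (Real.cos (φ (n+1)) : ℂ) * v 2 - (Real.sin (φ (n+1)) : ℂ) * v 3,
              (Real.sin (φ (n+1)) : ℂ) * v 2 + (Real.cos (φ (n+1)) : ℂ) * v 3] =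
            -(v 3) + I * v 2 := by
          simp [uvec, dotProduct, Fin.sum_univ_four]
        rw [this]
        refine abs_pair _ _ (by simp [him 3]) (him 2) ?_
        simp only [Complex.neg_re]
        nlinarith [hs]
      · have : uvec true ⬝ᵥ
            ![-(v 3), v 2,
              (Real.cos (φ (n+1)) : ℂ) * v 2 - (Real.sin (φ (n+1)) : ℂ) * v 3,
              (Real.sin (φ (n+1)) : ℂ) * v 2 + (Real.cos (φ (n+1)) : ℂ) * v 3] =
            ((Real.cos (φ (n+1)) : ℂ) * v 2 - (Real.sin (φ (n+1)) : ℂ) * v 3) +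
              I * ((Real.sin (φ (n+1)) : ℂ) * v 2 + (Real.cos (φ (n+1)) : ℂ) * v 3) := by
          simp [uvec, dotProduct, Fin.sum_univ_four]
        rw [this]
        refine abs_pair _ _ ?_ ?_ ?_
        · simp [Complex.sub_im, Complex.mul_im, him 2, him 3]
        · simp [Complex.add_im, Complex.mul_im, him 2, him 3]
        · simp only [Complex.sub_re, Complex.add_re, Complex.mul_re, Complex.ofReal_re,
            Complex.ofReal_im, him 2, him 3]
          linear_combination ((v 2).re ^ 2 + (v 3).re ^ 2) * hp + hs
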